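/- Every nice formula is avoidable: for every nice formula f there is an infinite word over some finite alphabet avoiding f. In particular, any Dejean word over an alphabet large enough that the repetition threshold is below 1 + 2^{1-v(f)} avoids f. -/

import Mathlib

/-- The finite factor of the infinite word `w` starting at position `i` of length `n`. -/
def extract {α : Type*} (w : ℕ → α) (i n : ℕ) : List α :=
  (List.range n).map (fun k => w (i + k))

/-- `u` is a (finite) factor of the infinite word `w`. -/
def IsFactorOf {α : Type*} (u : List α) (w : ℕ → α) : Prop :=
  ∃ i, u = extract w i u.length

/-- A morphism (given on variables/letters) is non-erasing. -/
def NonErasing {V α : Type*} (h : V → List α) : Prop := ∀ v, h v ≠ []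

/-- The image of a pattern `p` under the morphism induced by `h`. -/
def patImage {V α : Type*} (h : V → List α) (p : List V) : List α :=
  (p.map h).flatten

/-- `h` is an occurrence of the formula `f` (a set of fragments) in the infinite word `w`:
`h` is non-erasing and the `h`-image of every fragment of `f` is a factor of `w`. -/
def OccursIn {V α : Type*} (f : Set (List V)) (h : V → List α) (w : ℕ → α) : Prop :=
  NonErasing h ∧ ∀ p ∈ f, IsFactorOf (patImage h p) w

/-- The infinite word `w` avoids the formula `f`. -/
def Avoids {V α : Type*} (w : ℕ → α) (f : Set (List V)) : Prop :=
  ∀ h : V → List α, ¬ OccursIn f h w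

/-- An infinite word is recurrent if every factor occurs infinitely often. -/
def Recurrent {α : Type*} (w : ℕ → α) : Prop :=
  ∀ u : List α, IsFactorOf u w → ∀ N, ∃ i ≥ N, u = extract w i u.length

/-- An infinite word is square-free if it has no factor `uu` with `u` nonempty. -/
def SquareFree {α : Type*} (w : ℕ → α) : Prop :=
  ∀ u : List α, u ≠ [] → ¬ IsFactorOf (u ++ u) w

/-- The formula `f'` divides the formula `f`: some non-erasing morphism maps every
fragment of `f'` to a factor of some fragment of `f`. -/
def Divides {V' V : Type*} (f' : Set (List V')) (f : Set (List V)) : Prop :=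
  ∃ h : V' → List V, NonErasing h ∧ ∀ q ∈ f', ∃ p ∈ f, patImage h q <:+: p

/-- The avoidability index of a formula: the least alphabet size over which there is an
infinite word avoiding it. -/
noncomputable def lamIdx {V : Type*} (f : Set (List V)) : ℕ :=
  sInf {n : ℕ | ∃ w : ℕ → Fin n, Avoids w f}

/-- A formula is avoidable if some infinite word over some finite alphabet avoids it. -/
def Avoidable {V : Type*} (f : Set (List V)) : Prop :=
  ∃ (n : ℕ) (w : ℕ → Fin n), Avoids w f

/-- An infinite word is `r`-free: every factor of the form `x ++ y ++ x` with `x ≠ []`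
(a repetition of period `|xy|` and exponent `|xyx|/|xy|`) has exponent `< r`. -/
def AlphaFree {α : Type*} (w : ℕ → α) (r : ℝ) : Prop :=
  ∀ x y : List α, x ≠ [] → IsFactorOf (x ++ y ++ x) w →
    ((2 * x.length + y.length : ℝ) / (x.length + y.length)) < r

/-- An infinite word is `r⁺`-free: every such repetition has exponent `≤ r`. -/
def AlphaPlusFree {α : Type*} (w : ℕ → α) (r : ℝ) : Prop :=
  ∀ x y : List α, x ≠ [] → IsFactorOf (x ++ y ++ x) w →
    ((2 * x.length + y.length : ℝ) / (x.length + y.length)) ≤ r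

/-- A finite word is `r⁺`-free. -/
def AlphaPlusFreeList {α : Type*} (u : List α) (r : ℝ) : Prop :=
  ∀ x y : List α, x ≠ [] → (x ++ y ++ x) <:+: u →
    ((2 * x.length + y.length : ℝ) / (x.length + y.length)) ≤ r

theorem extract_length {α : Type*} (w : ℕ → α) (i n : ℕ) : (extract w i n).length = n := by
  simp [extract]

theorem extract_add {α : Type*} (w : ℕ → α) (i m n : ℕ) :
    extract w i (m + n) = extract w i m ++ extract w (i + m) n := by
  simp only [extract, List.range_add, List.map_append, List.map_map]
  congr 1
  apply List.map_congr_left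
  intro k _
  simp [Nat.add_assoc, Nat.add_comm m k, Nat.add_left_comm]

theorem isFactorOf_of_infix_extract {α : Type*} {w : ℕ → α} {u : List α} {i n : ℕ}
    (h : u <:+: extract w i n) : IsFactorOf u w := by
  obtain ⟨s, t, hst⟩ := h
  have hn : n = s.length + (u.length + t.length) := by
    have := congrArg List.length hst
    simpa [extract_length] using this.symm
  subst hn
  rw [extract_add, extract_add] at hst
  rw [List.append_assoc] at hst
  have h1 := List.append_inj hst (by simp [extract_length])
  have h2 := List.append_inj h1.2 (by simp [extract_length])
  exact ⟨i + s.length, h2.1⟩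

theorem isFactorOf_of_infix {α : Type*} {w : ℕ → α} {u v : List α}
    (hv : IsFactorOf v w) (h : u <:+: v) : IsFactorOf u w := by
  obtain ⟨i, hi⟩ := hv
  exact isFactorOf_of_infix_extract (u := u) (n := v.length) (by rw [← hi]; exact h)

theorem exists_first_split {V : Type*} {a : V} {l : List V} (h : a ∈ l) :
    ∃ s t, l = s ++ a :: t ∧ a ∉ s := by
  classical
  induction l with
  | nil => cases h
  | cons b l ih =>
    by_cases hb : a = b
    · exact ⟨[], l, by simp [hb], by simp⟩
    · have hal : a ∈ l := by
        rcases List.mem_cons.mp h with h' | h'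
        · exact absurd h' hb
        · exact h'
      obtain ⟨s, t, hst, hs⟩ := ih hal
      exact ⟨b :: s, t, by rw [hst]; rfl, by simp [hs, hb]⟩

theorem lemB {V : Type*} [DecidableEq V] (ℓ : V → ℕ) :
    ∀ k (W : List V), W.toFinset.card ≤ k → 2 ^ k ≤ W.length →
    ∃ x y : List V, x ≠ [] ∧ x ++ y ++ x <:+: W ∧
      2 * (y.map ℓ).sum + 2 * (x.map ℓ).sum ≤ 2 ^ k * (x.map ℓ).sum := by
  intro k
  induction k with
  | zero =>
    intro W hcard hlen
    exfalso
    have hW : W ≠ [] := List.ne_nil_of_length_pos (by simp at hlen; omega)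
    have : W.toFinset.Nonempty := by
      obtain ⟨a, ha⟩ := List.exists_mem_of_ne_nil W hW
      exact ⟨a, List.mem_toFinset.mpr ha⟩
    have := Finset.card_pos.mpr this
    omega
  | succ k ih =>
    intro W hcard hlen
    have hWne : W.toFinset.Nonempty := by
      obtain ⟨a, ha⟩ := List.exists_mem_of_ne_nil W
        (List.ne_nil_of_length_pos (by have : 0 < 2 ^ (k+1) := by positivity
                                       omega))
      exact ⟨a, List.mem_toFinset.mpr ha⟩
    obtain ⟨m, hmW, hmax⟩ := Finset.exists_max_image W.toFinset ℓ hWne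
    have hmW' : m ∈ W := List.mem_toFinset.mp hmW
    obtain ⟨A, B, hAB, hmA⟩ := exists_first_split hmW'
    by_cases hmB : m ∈ B
    · obtain ⟨C, D, hCD, hmC⟩ := exists_first_split hmB
      have hWeq : W = A ++ ([m] ++ C ++ [m]) ++ D := by
        rw [hAB, hCD]; simp
      have hinfix : [m] ++ C ++ [m] <:+: W := ⟨A, D, hWeq.symm⟩
      have hCsubW : ∀ c ∈ C, c ∈ W := by
        intro c hc; rw [hWeq]; simp [hc]
      by_cases hS : 2 * (C.map ℓ).sum + 2 * (([m] : List V).map ℓ).sum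
          ≤ 2 ^ (k + 1) * (([m] : List V).map ℓ).sum
      · exact ⟨[m], C, by simp, hinfix, hS⟩
      · push_neg at hS
        have hSle : (C.map ℓ).sum ≤ C.length * ℓ m := by
          have := List.sum_le_card_nsmul (C.map ℓ) (ℓ m) (by
            intro x hx
            obtain ⟨c, hc, rfl⟩ := List.mem_map.mp hx
            exact hmax c (List.mem_toFinset.mpr (hCsubW c hc)))
          simpa [smul_eq_mul, Nat.mul_comm] using this
        have hm1 : (([m] : List V).map ℓ).sum = ℓ m := by simp
        rw [hm1] at hS
        have hlenC : 2 ^ k ≤ C.length := by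
          have h1 : 2 ^ (k + 1) * ℓ m < (2 * C.length + 2) * ℓ m := by
            calc 2 ^ (k + 1) * ℓ m < 2 * (C.map ℓ).sum + 2 * ℓ m := hS
            _ ≤ 2 * (C.length * ℓ m) + 2 * ℓ m := by omega
            _ = (2 * C.length + 2) * ℓ m := by ring
          have h2 : 2 ^ (k + 1) < 2 * C.length + 2 :=
            Nat.lt_of_mul_lt_mul_right h1
          have h3 : 2 ^ (k + 1) = 2 * 2 ^ k := by ring
          omega
        have hCcard : C.toFinset.card ≤ k := by
          have hsub : C.toFinset ⊆ W.toFinset.erase m := by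
            intro c hc
            have hc' := List.mem_toFinset.mp hc
            exact Finset.mem_erase.mpr ⟨fun h => hmC (h ▸ hc'), List.mem_toFinset.mpr (hCsubW c hc')⟩
          have := Finset.card_le_card hsub
          have := Finset.card_erase_le (a := m) (s := W.toFinset)
          have h4 := Finset.card_erase_of_mem hmW
          omega
        obtain ⟨x, y, hxne, hxyx, hbound⟩ := ih C hCcard hlenC
        have hCinf : C <:+: W := ⟨A ++ [m], m :: D, by rw [hWeq]; simp⟩
        refine ⟨x, y, hxne, hxyx.trans hCinf, ?_⟩
        calc 2 * (y.map ℓ).sum + 2 * (x.map ℓ).sum ≤ 2 ^ k * (x.map ℓ).sum := hbound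
        _ ≤ 2 ^ (k + 1) * (x.map ℓ).sum := by
            apply Nat.mul_le_mul_right
            exact Nat.pow_le_pow_right (by norm_num) (by omega)
    · have hlenW : W.length = A.length + 1 + B.length := by
        rw [hAB]; simp; omega
      have h3 : 2 ^ (k + 1) = 2 * 2 ^ k := by ring
      have hor : 2 ^ k ≤ A.length ∨ 2 ^ k ≤ B.length := by omega
      have recurse : ∀ (U : List V), (∀ c ∈ U, c ∈ W) → m ∉ U → U <:+: W →
          2 ^ k ≤ U.length →
          ∃ x y : List V, x ≠ [] ∧ x ++ y ++ x <:+: W ∧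
            2 * (y.map ℓ).sum + 2 * (x.map ℓ).sum ≤ 2 ^ (k + 1) * (x.map ℓ).sum := by
        intro U hUsub hmU hUinf hUlen
        have hUcard : U.toFinset.card ≤ k := by
          have hsub : U.toFinset ⊆ W.toFinset.erase m := by
            intro c hc
            have hc' := List.mem_toFinset.mp hc
            exact Finset.mem_erase.mpr ⟨fun h => hmU (h ▸ hc'), List.mem_toFinset.mpr (hUsub c hc')⟩
          have := Finset.card_le_card hsub
          have := Finset.card_erase_of_mem hmW
          omega
        obtain ⟨x, y, hxne, hxyx, hbound⟩ := ih U hUcard hUlen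
        refine ⟨x, y, hxne, hxyx.trans hUinf, ?_⟩
        calc 2 * (y.map ℓ).sum + 2 * (x.map ℓ).sum ≤ 2 ^ k * (x.map ℓ).sum := hbound
        _ ≤ 2 ^ (k + 1) * (x.map ℓ).sum := by
            apply Nat.mul_le_mul_right
            exact Nat.pow_le_pow_right (by norm_num) (by omega)
      rcases hor with hA | hB
      · exact recurse A (by intro c hc; rw [hAB]; simp [hc]) hmA ⟨[], m :: B, by rw [hAB]; simp⟩ hA
      · exact recurse B (by intro c hc; rw [hAB]; simp [hc]) hmB ⟨A ++ [m], [], by rw [hAB]; simp⟩ hB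

theorem patImage_append {V α : Type*} (h : V → List α) (p q : List V) :
    patImage h (p ++ q) = patImage h p ++ patImage h q := by
  simp [patImage]

theorem patImage_singleton {V α : Type*} (h : V → List α) (a : V) :
    patImage h [a] = h a := by simp [patImage]

theorem patImage_length {V α : Type*} (h : V → List α) (p : List V) :
    (patImage h p).length = (p.map (fun v => (h v).length)).sum := by
  simp [patImage, List.length_flatten, Function.comp_def]

theorem patImage_infix {V α : Type*} (h : V → List α) {q p : List V} (hqp : q <:+: p) :
    patImage h q <:+: patImage h p := by
  obtain ⟨s, t, rfl⟩ := hqp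
  exact ⟨patImage h s, patImage h t, by simp [patImage_append]⟩

theorem patImage_ne_nil {V α : Type*} {h : V → List α} (hne : NonErasing h)
    {x : List V} (hx : x ≠ []) : patImage h x ≠ [] := by
  intro hcon
  have := congrArg List.length hcon
  rw [patImage_length] at this
  obtain ⟨a, t, rfl⟩ := List.exists_cons_of_ne_nil hx
  simp at this
  exact hne a this.1

theorem lemA {V α : Type*} [Fintype V] [DecidableEq V] [Nonempty V] {f : Set (List V)}
    (hnice : ∀ v : V, ∃ p ∈ f, 2 ≤ p.count v) {w : ℕ → α} {h : V → List α}
    (hocc : OccursIn f h w) :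
    ∃ X Y : List α, X ≠ [] ∧ IsFactorOf (X ++ Y ++ X) w ∧
      2 * Y.length + 2 * X.length ≤ 2 ^ (Fintype.card V) * X.length := by
  classical
  set v := Fintype.card V with hv
  set ℓ : V → ℕ := fun b => (h b).length with hℓdef
  obtain ⟨a, _, hmax⟩ := Finset.exists_max_image (Finset.univ : Finset V) ℓ
    Finset.univ_nonempty
  obtain ⟨p, hpf, hcnt⟩ := hnice a
  have hap : a ∈ p := List.count_pos_iff.mp (by omega)
  obtain ⟨A, B, hAB, haA⟩ := exists_first_split hap
  have haB : a ∈ B := by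
    have : p.count a = A.count a + (1 + B.count a) := by
      rw [hAB]; simp [List.count_append, List.count_cons]; omega
    have hA0 : A.count a = 0 := List.count_eq_zero.mpr haA
    have : 1 ≤ B.count a := by omega
    exact List.count_pos_iff.mp (by omega)
  obtain ⟨C, D, hCD, haC⟩ := exists_first_split haB
  have hpeq : p = A ++ ([a] ++ C ++ [a]) ++ D := by rw [hAB, hCD]; simp
  have hCinf : C <:+: p := ⟨A ++ [a], a :: D, by rw [hpeq]; simp⟩
  have hfac : IsFactorOf (patImage h p) w := hocc.2 p hpf
  have hXa : (h a).length = ℓ a := rfl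
  by_cases hS : 2 * ((C.map ℓ).sum) + 2 * ℓ a ≤ 2 ^ v * ℓ a
  · refine ⟨h a, patImage h C, hocc.1 a, ?_, ?_⟩
    · apply isFactorOf_of_infix hfac
      have : h a ++ patImage h C ++ h a = patImage h ([a] ++ C ++ [a]) := by
        simp [patImage]
      rw [this]
      exact patImage_infix h ⟨A, D, by rw [hpeq]⟩
    · rw [patImage_length, hXa]
      exact hS
  · push_neg at hS
    have hCsubp : ∀ c ∈ C, c ∈ p := fun c hc => by rw [hpeq]; simp [hc]
    have hSle : (C.map ℓ).sum ≤ C.length * ℓ a := by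
      have := List.sum_le_card_nsmul (C.map ℓ) (ℓ a) (by
        intro x hx
        obtain ⟨c, _, rfl⟩ := List.mem_map.mp hx
        exact hmax c (Finset.mem_univ c))
      simpa [smul_eq_mul, Nat.mul_comm] using this
    have hv1 : 1 ≤ v := Fintype.card_pos
    have hpow : 2 ^ v = 2 * 2 ^ (v - 1) := by
      conv_lhs => rw [show v = (v - 1) + 1 by omega]
      ring
    have hlenC : 2 ^ (v - 1) ≤ C.length := by
      have h1 : 2 ^ v * ℓ a < (2 * C.length + 2) * ℓ a := by
        calc 2 ^ v * ℓ a < 2 * (C.map ℓ).sum + 2 * ℓ a := hS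
        _ ≤ 2 * (C.length * ℓ a) + 2 * ℓ a := by omega
        _ = (2 * C.length + 2) * ℓ a := by ring
      have h2 := Nat.lt_of_mul_lt_mul_right h1
      omega
    have hCcard : C.toFinset.card ≤ v - 1 := by
      have hsub : C.toFinset ⊆ (Finset.univ : Finset V).erase a := by
        intro c hc
        exact Finset.mem_erase.mpr ⟨fun hca => haC (hca ▸ List.mem_toFinset.mp hc),
          Finset.mem_univ c⟩
      have h1 := Finset.card_le_card hsub
      have h2 := Finset.card_erase_of_mem (Finset.mem_univ a)
      rw [Finset.card_univ] at h2
      omega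
    obtain ⟨x, y, hxne, hxyx, hbound⟩ := lemB ℓ (v - 1) C hCcard hlenC
    refine ⟨patImage h x, patImage h y, patImage_ne_nil hocc.1 hxne, ?_, ?_⟩
    · apply isFactorOf_of_infix hfac
      have : patImage h x ++ patImage h y ++ patImage h x = patImage h (x ++ y ++ x) := by
        simp [patImage]
      rw [this]
      exact patImage_infix h (hxyx.trans hCinf)
    · rw [patImage_length, patImage_length]
      have e1 : ((x.map fun b => (h b).length).sum) = (x.map ℓ).sum := rfl
      have e2 : ((y.map fun b => (h b).length).sum) = (y.map ℓ).sum := rfl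
      rw [e1, e2]
      calc 2 * (y.map ℓ).sum + 2 * (x.map ℓ).sum ≤ 2 ^ (v - 1) * (x.map ℓ).sum := hbound
      _ ≤ 2 ^ v * (x.map ℓ).sum := Nat.mul_le_mul_right _ (Nat.pow_le_pow_right (by norm_num) (by omega))


def GoodW (Q : ℕ) {α : Type*} (u : List α) : Prop :=
  ∀ x y : List α, x ≠ [] → x ++ y ++ x <:+: u → ¬ (x.length + y.length ≤ Q * x.length)

theorem goodW_of_infix {Q : ℕ} {α : Type*} {u s : List α} (hu : GoodW Q u)
    (hs : s <:+: u) : GoodW Q s :=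
  fun x y hx hxyx => hu x y hx (hxyx.trans hs)

theorem goodW_nil {Q : ℕ} {α : Type*} : GoodW Q ([] : List α) := by
  intro x y hx hxyx
  exfalso
  have := List.eq_nil_of_infix_nil hxyx
  simp at this
  exact hx this.1

def allL (N : ℕ) : ℕ → Finset (List (Fin N))
  | 0 => {[]}
  | (L+1) => ((Finset.univ : Finset (Fin N)) ×ˢ allL N L).image (fun q => q.1 :: q.2)

theorem mem_allL {N : ℕ} : ∀ {L : ℕ} {u : List (Fin N)}, u ∈ allL N L ↔ u.length = L := by
  intro L
  induction L with
  | zero => intro u; simp [allL, List.length_eq_zero_iff]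
  | succ L ih =>
    intro u
    constructor
    · intro hu
      simp only [allL, Finset.mem_image] at hu
      obtain ⟨q, hq, rfl⟩ := hu
      have := ih.mp (Finset.mem_product.mp hq).2
      simp [this]
    · intro hu
      have hne : u ≠ [] := by intro hcon; rw [hcon] at hu; simp at hu
      obtain ⟨c, u', rfl⟩ := List.exists_cons_of_ne_nil hne
      simp only [allL, Finset.mem_image]
      refine ⟨(c, u'), Finset.mem_product.mpr ⟨Finset.mem_univ c, ih.mpr ?_⟩, rfl⟩
      simpa using hu

open Classical in
noncomputable def G (Q N L : ℕ) : Finset (List (Fin N)) :=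
  (allL N L).filter (fun u => GoodW Q u)

theorem mem_G {Q N L : ℕ} {u : List (Fin N)} : u ∈ G Q N L ↔ u.length = L ∧ GoodW Q u := by
  classical
  simp [G, mem_allL]

theorem G_zero_card {Q N : ℕ} : 1 ≤ (G Q N 0).card := by
  have : ([] : List (Fin N)) ∈ G Q N 0 := mem_G.mpr ⟨rfl, goodW_nil⟩
  exact Finset.card_pos.mpr ⟨[], this⟩

theorem sumlem : ∀ M : ℕ, (Finset.Icc 1 M).sum (fun a => a * 2 ^ (M - a)) + M + 2 = 2 ^ (M + 1) := by
  intro M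
  induction M with
  | zero => simp
  | succ M ih =>
    rw [Finset.sum_Icc_succ_top (by omega : 1 ≤ M + 1)]
    have step : (Finset.Icc 1 M).sum (fun a => a * 2 ^ (M + 1 - a))
        = 2 * (Finset.Icc 1 M).sum (fun a => a * 2 ^ (M - a)) := by
      rw [Finset.mul_sum]
      apply Finset.sum_congr rfl
      intro a ha
      have haM : a ≤ M := (Finset.mem_Icc.mp ha).2
      have : M + 1 - a = (M - a) + 1 := by omega
      rw [this, pow_succ]
      ring
    rw [step]
    simp only [Nat.sub_self, pow_zero, mul_one]
    have h2 : 2 ^ (M + 1 + 1) = 2 * 2 ^ (M + 1) := by ring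
    omega

theorem growth (Q N : ℕ) (hQ : 1 ≤ Q) (hN : N = 4 * Q + 2) :
    ∀ L, 2 * (G Q N L).card ≤ (G Q N (L + 1)).card := by
  intro L
  induction L using Nat.strong_induction_on with
  | _ L IH =>
  classical
  have chain : ∀ j, j ≤ L → 2 ^ j * (G Q N (L - j)).card ≤ (G Q N L).card := by
    intro j
    induction j with
    | zero => intro _; simpa using le_refl _
    | succ j ihj =>
      intro hj
      have h1 : 2 * (G Q N (L - j - 1)).card ≤ (G Q N (L - j - 1 + 1)).card :=
        IH (L - j - 1) (by omega)
      have h2 : L - j - 1 + 1 = L - j := by omega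
      rw [h2] at h1
      calc 2 ^ (j + 1) * (G Q N (L - (j + 1))).card
          = 2 ^ j * (2 * (G Q N (L - j - 1)).card) := by
            rw [show L - (j + 1) = L - j - 1 by omega]; ring
      _ ≤ 2 ^ j * (G Q N (L - j)).card := Nat.mul_le_mul_left _ h1
      _ ≤ (G Q N L).card := ihj (by omega)
  set E := ((G Q N L) ×ˢ (Finset.univ : Finset (Fin N))).image (fun q => q.1 ++ [q.2]) with hE
  have hlenE : ∀ u ∈ E, u.length = L + 1 ∧ ∃ u' c, u = u' ++ [c] ∧ u' ∈ G Q N L := by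
    intro u hu
    rw [hE, Finset.mem_image] at hu
    obtain ⟨q, hq, rfl⟩ := hu
    have hq1 := (Finset.mem_product.mp hq).1
    have hl := (mem_G.mp hq1).1
    exact ⟨by simp [hl], q.1, q.2, rfl, hq1⟩
  have hEcard : E.card = (G Q N L).card * N := by
    rw [hE, Finset.card_image_of_injOn, Finset.card_product, Finset.card_univ,
      Fintype.card_fin]
    intro q1 h1 q2 h2 heq
    have l1 : q1.1.length = L := (mem_G.mp (Finset.mem_product.mp h1).1).1
    have l2 : q2.1.length = L := (mem_G.mp (Finset.mem_product.mp h2).1).1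
    have h3 := List.append_inj' heq (by simp)
    have h4 : q1.2 = q2.2 := by
      have := h3.2
      simpa using this
    exact Prod.ext h3.1 h4
  set Bad := E.filter (fun u => ¬ GoodW Q u) with hBad
  have hsplit := Finset.card_filter_add_card_filter_not
    (s := E) (p := fun u => GoodW Q u)
  have hgoodsub : E.filter (fun u => GoodW Q u) ⊆ G Q N (L + 1) := by
    intro u hu
    rw [Finset.mem_filter] at hu
    exact mem_G.mpr ⟨(hlenE u hu.1).1, hu.2⟩
  set S := (Finset.Icc 1 (L + 1)).sigma
    (fun a => (Finset.Icc a (Q * a)) ×ˢ (G Q N (L + 1 - a))) with hS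
  have h666 : ∀ w ∈ Bad, ∃ z : (_ : ℕ) × ℕ × List (Fin N), z ∈ S ∧
      w = z.2.2 ++ ((z.2.2.drop (z.2.2.length - z.2.1)).take z.1) := by
    intro w hw
    rw [hBad, Finset.mem_filter] at hw
    obtain ⟨hwE, hwbad⟩ := hw
    obtain ⟨hwlen, u, c, rfl, huG⟩ :
        w.length = L + 1 ∧ ∃ u' c, w = u' ++ [c] ∧ u' ∈ G Q N L := hlenE w hwE
    have hulen : u.length = L := (mem_G.mp huG).1
    have hugood : GoodW Q u := (mem_G.mp huG).2
    rw [GoodW] at hwbad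
    push_neg at hwbad
    obtain ⟨x, y, hxne, hinf, hle⟩ := hwbad
    obtain ⟨s, t, hst⟩ := hinf
    have ht : t = [] := by
      rcases List.eq_nil_or_concat t with h | ⟨t', c', rfl⟩
      · exact h
      · exfalso
        have h1 : (s ++ (x ++ y ++ x) ++ t') ++ [c'] = u ++ [c] := by
          rw [← hst]; simp
        have h2 := List.append_inj' h1 (by simp)
        exact hugood x y hxne ⟨s, t', by rw [h2.1]⟩ hle
    rw [ht, List.append_nil] at hst
    set a := x.length with hadef
    set p := x.length + y.length with hpdef
    have ha1 : 1 ≤ a := List.length_pos_iff.mpr hxne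
    have hlens : s.length + (a + y.length + a) = L + 1 := by
      have := congrArg List.length hst
      simp at this
      omega
    set t0 := s ++ (x ++ y) with ht0
    have ht0len : t0.length = L + 1 - a := by
      rw [ht0]; simp; omega
    have ht0pref : t0 <+: u := by
      rcases List.eq_nil_or_concat x with h | ⟨x', c'', rfl⟩
      · exact absurd h hxne
      · have h1 : (t0 ++ x') ++ [c''] = u ++ [c] := by
          rw [← hst, ht0]; simp
        have h2 := List.append_inj' h1 (by simp)
        exact ⟨x', h2.1⟩
    have ht0G : t0 ∈ G Q N (L + 1 - a) :=
      mem_G.mpr ⟨ht0len, goodW_of_infix hugood ht0pref.isInfix⟩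
    refine ⟨⟨a, p, t0⟩, ?_, ?_⟩
    · rw [hS, Finset.mem_sigma]
      refine ⟨?_, ?_⟩
      · show a ∈ Finset.Icc 1 (L + 1)
        exact Finset.mem_Icc.mpr ⟨ha1, by omega⟩
      · show (p, t0) ∈ Finset.Icc a (Q * a) ×ˢ G Q N (L + 1 - a)
        exact Finset.mem_product.mpr ⟨Finset.mem_Icc.mpr ⟨by omega, by omega⟩, ht0G⟩
    · show u ++ [c] = t0 ++ ((t0.drop (t0.length - p)).take a)
      have hd : t0.length - p = s.length := by
        rw [ht0]
        simp only [List.length_append]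
        omega
      rw [hd, ht0, List.drop_left, hadef, List.take_left, ← hst]
      simp
  have hBadle : Bad.card ≤ S.card := by
    have hchoice : ∀ w : List (Fin N), ∃ z : (_ : ℕ) × ℕ × List (Fin N),
        w ∈ Bad → (z ∈ S ∧ w = z.2.2 ++ ((z.2.2.drop (z.2.2.length - z.2.1)).take z.1)) := by
      intro w
      by_cases hw : w ∈ Bad
      · obtain ⟨z, hz⟩ := h666 w hw
        exact ⟨z, fun _ => hz⟩
      · exact ⟨⟨0, 0, []⟩, fun h => absurd h hw⟩
    choose φ hφ using hchoice
    apply Finset.card_le_card_of_injOn φ (fun w hw => (hφ w hw).1)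
    intro w1 h1 w2 h2 heq
    rw [(hφ w1 h1).2, heq, ← (hφ w2 h2).2]
  have hScard : S.card = (Finset.Icc 1 (L + 1)).sum
      (fun a => (Finset.Icc a (Q * a)).card * (G Q N (L + 1 - a)).card) := by
    rw [hS, Finset.card_sigma]
    apply Finset.sum_congr rfl
    intro a _
    rw [Finset.card_product]
  have hSbound : S.card * 2 ^ L ≤ 4 * Q * (G Q N L).card * 2 ^ L := by
    have hterm : ∀ a ∈ Finset.Icc 1 (L + 1),
        (Finset.Icc a (Q * a)).card * (G Q N (L + 1 - a)).card * 2 ^ L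
          ≤ Q * (G Q N L).card * (a * 2 ^ (L + 1 - a)) := by
      intro a ha
      obtain ⟨ha1, haL⟩ := Finset.mem_Icc.mp ha
      have hc1 : (Finset.Icc a (Q * a)).card ≤ Q * a := by
        rw [Nat.card_Icc]
        have : 1 * a ≤ Q * a := Nat.mul_le_mul_right a hQ
        omega
      have hpow : 2 ^ L = 2 ^ (a - 1) * 2 ^ (L + 1 - a) := by
        rw [← pow_add]
        congr 1
        omega
      have hch : 2 ^ (a - 1) * (G Q N (L + 1 - a)).card ≤ (G Q N L).card := by
        have := chain (a - 1) (by omega)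
        rw [show L - (a - 1) = L + 1 - a by omega] at this
        exact this
      calc (Finset.Icc a (Q * a)).card * (G Q N (L + 1 - a)).card * 2 ^ L
          = (Finset.Icc a (Q * a)).card * ((2 ^ (a - 1) * (G Q N (L + 1 - a)).card) * 2 ^ (L + 1 - a)) := by
            rw [hpow]; ring
        _ ≤ (Q * a) * ((G Q N L).card * 2 ^ (L + 1 - a)) :=
            Nat.mul_le_mul hc1 (Nat.mul_le_mul_right _ hch)
        _ = Q * (G Q N L).card * (a * 2 ^ (L + 1 - a)) := by ring
    have hsum1 : (Finset.Icc 1 (L + 1)).sum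
        (fun a => (Finset.Icc a (Q * a)).card * (G Q N (L + 1 - a)).card * 2 ^ L)
        ≤ (Finset.Icc 1 (L + 1)).sum (fun a => Q * (G Q N L).card * (a * 2 ^ (L + 1 - a))) :=
      Finset.sum_le_sum hterm
    have hsum2 : (Finset.Icc 1 (L + 1)).sum (fun a => Q * (G Q N L).card * (a * 2 ^ (L + 1 - a)))
        = Q * (G Q N L).card * (Finset.Icc 1 (L + 1)).sum (fun a => a * 2 ^ (L + 1 - a)) := by
      rw [Finset.mul_sum]
    have hsum3 : (Finset.Icc 1 (L + 1)).sum (fun a => a * 2 ^ (L + 1 - a)) ≤ 2 ^ (L + 2) := by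
      have h5 : (Finset.Icc 1 (L + 1)).sum (fun a => a * 2 ^ (L + 1 - a)) + (L + 1) + 2
          = 2 ^ (L + 2) := sumlem (L + 1)
      omega
    calc S.card * 2 ^ L
        = (Finset.Icc 1 (L + 1)).sum
          (fun a => (Finset.Icc a (Q * a)).card * (G Q N (L + 1 - a)).card * 2 ^ L) := by
          rw [hScard, Finset.sum_mul]
      _ ≤ Q * (G Q N L).card * (Finset.Icc 1 (L + 1)).sum (fun a => a * 2 ^ (L + 1 - a)) := by
          rw [← hsum2]; exact hsum1
      _ ≤ Q * (G Q N L).card * 2 ^ (L + 2) := Nat.mul_le_mul_left _ hsum3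
      _ = 4 * Q * (G Q N L).card * 2 ^ L := by ring
  have hSle : S.card ≤ 4 * Q * (G Q N L).card :=
    Nat.le_of_mul_le_mul_right hSbound (by positivity)
  have h1 : E.card ≤ (G Q N (L + 1)).card + Bad.card := by
    have h1a := Finset.card_le_card hgoodsub
    have h1b : Bad.card = (E.filter (fun a => ¬ GoodW Q a)).card := rfl
    omega
  have h2 : Bad.card ≤ 4 * Q * (G Q N L).card := le_trans hBadle hSle
  have e2 : E.card = 4 * Q * (G Q N L).card + 2 * (G Q N L).card := by
    rw [hEcard, hN]; ring
  linarith [h1, h2, e2]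

def ExtW (Q N : ℕ) (u : List (Fin N)) : Prop :=
  ∀ L, ∃ z, GoodW Q (u ++ z) ∧ L ≤ z.length

theorem exists_good_word (Q N : ℕ) (hQ : 1 ≤ Q) (hN : N = 4 * Q + 2) :
    ∃ w : ℕ → Fin N, ∀ u : List (Fin N), IsFactorOf u w → GoodW Q u := by
  classical
  have hcard : ∀ L, 1 ≤ (G Q N L).card := by
    intro L
    induction L with
    | zero => exact G_zero_card
    | succ L ih =>
      have := growth Q N hQ hN L
      omega
  have hextnil : ExtW Q N [] := by
    intro L
    obtain ⟨z, hz⟩ := Finset.card_pos.mp (by have := hcard L; omega : 0 < (G Q N L).card)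
    obtain ⟨hzlen, hzgood⟩ := mem_G.mp hz
    exact ⟨z, by simpa using hzgood, by omega⟩
  have hstep : ∀ u : List (Fin N), ExtW Q N u → ∃ c, ExtW Q N (u ++ [c]) := by
    intro u hu
    by_contra hcon
    push_neg at hcon
    simp only [ExtW, not_forall, not_exists, not_and, not_le] at hcon
    choose Lc hLc using hcon
    have hNpos : 0 < N := by omega
    haveI : Nonempty (Fin N) := ⟨⟨0, hNpos⟩⟩
    set M := (Finset.univ : Finset (Fin N)).sup Lc + 1 with hM
    obtain ⟨z, hzgood, hzlen⟩ := hu M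
    have hzne : z ≠ [] := by
      intro hcon2
      rw [hcon2] at hzlen
      simp only [List.length_nil] at hzlen
      omega
    obtain ⟨c, z', rfl⟩ := List.exists_cons_of_ne_nil hzne
    have h1 : GoodW Q ((u ++ [c]) ++ z') := by
      simpa [List.append_assoc] using hzgood
    have h2 := hLc c z' h1
    have h3 : Lc c ≤ (Finset.univ : Finset (Fin N)).sup Lc :=
      Finset.le_sup (Finset.mem_univ c)
    simp at hzlen
    omega
  let F : {l : List (Fin N) // ExtW Q N l} → {l : List (Fin N) // ExtW Q N l} :=
    fun s => ⟨s.1 ++ [Classical.choose (hstep s.1 s.2)],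
      Classical.choose_spec (hstep s.1 s.2)⟩
  let seq : ℕ → {l : List (Fin N) // ExtW Q N l} := fun n => F^[n] ⟨[], hextnil⟩
  have hseq_succ : ∀ n, seq (n + 1) = F (seq n) := by
    intro n
    simp only [seq, Function.iterate_succ_apply']
  have hlen : ∀ n, (seq n).1.length = n := by
    intro n
    induction n with
    | zero => rfl
    | succ n ih =>
      rw [hseq_succ n]
      simp [F, ih]
  have hpref : ∀ n, (seq n).1 <+: (seq (n + 1)).1 := by
    intro n
    rw [hseq_succ n]
    exact ⟨[Classical.choose (hstep (seq n).1 (seq n).2)], rfl⟩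
  have hmono : ∀ m n, m ≤ n → (seq m).1 <+: (seq n).1 := by
    intro m n hmn
    induction n, hmn using Nat.le_induction with
    | base => exact List.prefix_refl _
    | succ n hmn ih => exact ih.trans (hpref n)
  have hgood : ∀ n, GoodW Q (seq n).1 := by
    intro n
    obtain ⟨z, hzgood, _⟩ := (seq n).2 0
    exact goodW_of_infix hzgood ⟨[], z, by simp⟩
  refine ⟨fun i => (seq (i + 1)).1[i]'(by rw [hlen]; omega), ?_⟩
  set w : ℕ → Fin N := fun i => (seq (i + 1)).1[i]'(by rw [hlen]; omega) with hw
  have hget : ∀ j m (hm : j < m), (seq m).1[j]'(by rw [hlen]; exact hm) = w j := by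
    intro j m hm
    have hp := hmono (j + 1) m hm
    have hj : j < (seq (j + 1)).1.length := by rw [hlen]; omega
    exact (hp.getElem hj).symm
  have hfactor : ∀ i n, extract w i n = (seq (i + n)).1.drop i := by
    intro i n
    apply List.ext_getElem
    · simp [extract_length, hlen]
    · intro k h1 h2
      have hik : i + k < i + n := by
        rw [extract_length] at h1
        omega
      rw [List.getElem_drop]
      have := hget (i + k) (i + n) hik
      rw [this]
      simp [extract]
  intro u hu
  obtain ⟨i, hi⟩ := hu
  rw [hi, hfactor]
  exact goodW_of_infix (hgood (i + u.length)) (List.drop_suffix _ _).isInfix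


theorem exp_contra (A B : ℕ) (r : ℝ) (v : ℕ) (hA : 1 ≤ A)
    (hle : 2 * B + 2 * A ≤ 2 ^ v * A)
    (hexp : ((2 * A + B : ℝ)) / ((A : ℝ) + B) ≤ r)
    (hr : r < 1 + (2 : ℝ) ^ ((1 : ℤ) - (v : ℤ))) : False := by
  have hP : (0:ℝ) < 2 ^ v := by positivity
  have hzp : (2:ℝ) ^ ((1:ℤ) - (v:ℤ)) = 2 / (2:ℝ)^v := by
    rw [zpow_sub₀ (by norm_num : (2:ℝ) ≠ 0)]
    norm_num
  have hAr : (1:ℝ) ≤ A := by exact_mod_cast hA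
  have hler : 2 * (B:ℝ) + 2 * A ≤ 2 ^ v * A := by exact_mod_cast hle
  have hd : (0:ℝ) < (A:ℝ) + B := by
    have hB : (0:ℝ) ≤ B := Nat.cast_nonneg B
    linarith
  have key : 1 + (2:ℝ) ^ ((1:ℤ) - (v:ℤ)) ≤ (2 * A + B : ℝ) / ((A:ℝ) + B) := by
    rw [hzp, le_div_iff₀ hd]
    have hB : (0:ℝ) ≤ B := Nat.cast_nonneg B
    have h2 : 2 / (2:ℝ)^v * ((A:ℝ)+B) ≤ (A:ℝ) := by
      rw [div_mul_eq_mul_div, div_le_iff₀ hP]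
      nlinarith
    nlinarith
  linarith


/-- every nice formula `f` is avoidable. In particular, for n ≥ 5 with
repetition threshold RT(n) = n/(n-1) below 1 + 2^(1-v(f)), every Dejean word over
n letters (an (n/(n-1))⁺-free word) avoids `f`. -/
theorem stmt8 {V : Type*} [Fintype V] [DecidableEq V] [Nonempty V]
    (f : Set (List V)) (hnice : ∀ v : V, ∃ p ∈ f, 2 ≤ p.count v) :
    Avoidable f ∧
    ∀ n : ℕ, 5 ≤ n →
      (n : ℝ) / ((n : ℝ) - 1) < 1 + (2 : ℝ) ^ ((1 : ℤ) - (Fintype.card V : ℤ)) →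
      ∀ w : ℕ → Fin n, AlphaPlusFree w ((n : ℝ) / ((n : ℝ) - 1)) → Avoids w f := by
  classical
  have hv1 : 1 ≤ Fintype.card V := Fintype.card_pos
  constructor
  · set Q := 2 ^ (Fintype.card V - 1) with hQ
    obtain ⟨w, hw⟩ := exists_good_word Q (4 * Q + 2) Nat.one_le_two_pow rfl
    refine ⟨4 * Q + 2, w, ?_⟩
    intro h hocc
    obtain ⟨X, Y, hXne, hfac, hbound⟩ := lemA hnice hocc
    have hgood := hw _ hfac
    refine hgood X Y hXne (List.infix_refl _) ?_
    have h2 : 2 ^ (Fintype.card V) = 2 * Q := by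
      rw [hQ, ← pow_succ']
      congr 1
      omega
    have h3 : 2 ^ (Fintype.card V) * X.length = 2 * (Q * X.length) := by
      rw [h2]; ring
    omega
  · intro n _ hr w hfree h hocc
    obtain ⟨X, Y, hXne, hfac, hbound⟩ := lemA hnice hocc
    have hexp := hfree X Y hXne hfac
    exact exp_contra X.length Y.length _ (Fintype.card V)
      (List.length_pos_iff.mpr hXne) hbound (by exact_mod_cast hexp) hr
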